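/- arXiv:2411.06924 — 4 statements merged into one kernel-verified Lean document; each statement's English description precedes it below -/
import Mathlib

section
/- Let x > 0 be real, and consider allocations into n_s bundles with all bundle values in {x, x + 1/2, x + 1} and fixed total value S. If two such allocations have half-bundle counts n_h and m_h (numbers of bundles of value x + 1/2) with n_h > m_h, then the product of bundle values in the first allocation is strictly larger than in the second. -/
theorem stmt_4 (x : ℝ) (hx : x > 0) (ns : ℕ) (S : ℝ)
    (n₀ nh n₁ m₀ mh m₁ : ℕ)
    (hn : n₀ + nh + n₁ = ns)
    (hm : m₀ + mh + m₁ = ns)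
    (hSn : (n₀ : ℝ) * x + (nh : ℝ) * (x + 1/2) + (n₁ : ℝ) * (x + 1) = S)
    (hSm : (m₀ : ℝ) * x + (mh : ℝ) * (x + 1/2) + (m₁ : ℝ) * (x + 1) = S)
    (hgt : nh > mh) :
    x ^ n₀ * (x + 1/2) ^ nh * (x + 1) ^ n₁ >
      x ^ m₀ * (x + 1/2) ^ mh * (x + 1) ^ m₁ := by
  have hns : n₀ + nh + n₁ = m₀ + mh + m₁ := hn.trans hm.symm
  have hnsr : (n₀ : ℝ) + nh + n₁ = (m₀ : ℝ) + mh + m₁ := by exact_mod_cast hns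
  have h1 : (nh : ℝ) + 2 * n₁ = (mh : ℝ) + 2 * m₁ := by
    linear_combination 2 * hSn - 2 * hSm - 2 * x * hnsr
  have h1n : nh + 2 * n₁ = mh + 2 * m₁ := by exact_mod_cast h1
  obtain ⟨k, hk⟩ : ∃ k, m₁ = n₁ + k := ⟨m₁ - n₁, by omega⟩
  have hk0 : k ≠ 0 := by omega
  have hnh : nh = mh + 2 * k := by omega
  have hm0 : m₀ = n₀ + k := by omega
  subst hk hnh hm0
  have key : x ^ k * (x + 1) ^ k < (x + 1/2) ^ (2 * k) := by
    rw [← mul_pow, pow_mul]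
    apply pow_lt_pow_left₀ _ (by positivity) hk0
    nlinarith
  calc x ^ (n₀ + k) * (x + 1/2) ^ mh * (x + 1) ^ (n₁ + k)
      = (x ^ n₀ * (x + 1/2) ^ mh * (x + 1) ^ n₁) * (x ^ k * (x + 1) ^ k) := by ring
    _ < (x ^ n₀ * (x + 1/2) ^ mh * (x + 1) ^ n₁) * (x + 1/2) ^ (2 * k) := by
        exact mul_lt_mul_of_pos_left key (by positivity)
    _ = x ^ n₀ * (x + 1/2) ^ (mh + 2 * k) * (x + 1) ^ n₁ := by ring
end

section
/- Let s = p/2 with p an odd integer, p ≥ 3, and for a half-integer w let r(w) = max { r ∈ ℕ : w - s*r ∈ ℕ } (assuming the set is nonempty). Let x be a half-integer with r(x), r(x+1/2), r(x+1) defined. Then: (a) if x + 1 is an integer multiple of s, then r(x) = r(x+1/2) - 1 and r(x+1) = r(x+1/2) + 1; (b) if x + 1 is not an integer multiple of s and x + 1 > (r(x+1/2) + 1)*s, then r(x+1) = r(x) = r(x+1/2) + 1; (c) if x + 1 is not an integer multiple of s and x + 1 < (r(x+1/2) + 1)*s, then r(x+1) = r(x) = r(x+1/2) - 1. -/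
/-- `r` is the maximum number of heavy goods (each of value `s`) that a bundle
of total value `w` may contain, the rest being light goods of value 1. -/
def IsMaxHeavy (s w : ℝ) (r : ℕ) : Prop :=
  (∃ m : ℕ, w - s * r = (m : ℝ)) ∧
  ∀ r' : ℕ, (∃ m : ℕ, w - s * r' = (m : ℝ)) → r' ≤ r

private lemma le_max_aux (s w : ℝ) (r : ℕ) (h : IsMaxHeavy s w r) (c : ℕ) (n : ℤ)
    (hn : 0 ≤ n) (he : w - s * c = (n : ℝ)) : c ≤ r := by
  refine h.2 c ⟨n.toNat, ?_⟩
  rw [he]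
  exact_mod_cast congrArg (fun z : ℤ => (z : ℝ)) (Int.toNat_of_nonneg hn).symm

theorem stmt_6 (p : ℤ) (hodd : Odd p) (hp : 3 ≤ p) (s : ℝ) (hs : s = (p : ℝ) / 2)
    (x : ℝ) (hx : ∃ q : ℤ, x = (q : ℝ) / 2)
    (r0 rh r1 : ℕ)
    (h0 : IsMaxHeavy s x r0)
    (hh : IsMaxHeavy s (x + 1/2) rh)
    (h1 : IsMaxHeavy s (x + 1) r1) :
    ((∃ k : ℤ, x + 1 = (k : ℝ) * s) →
        (r0 : ℤ) = (rh : ℤ) - 1 ∧ (r1 : ℤ) = (rh : ℤ) + 1) ∧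
    ((¬ ∃ k : ℤ, x + 1 = (k : ℝ) * s) → x + 1 > ((rh : ℝ) + 1) * s →
        (r1 : ℤ) = (rh : ℤ) + 1 ∧ (r0 : ℤ) = (rh : ℤ) + 1) ∧
    ((¬ ∃ k : ℤ, x + 1 = (k : ℝ) * s) → x + 1 < ((rh : ℝ) + 1) * s →
        (r1 : ℤ) = (rh : ℤ) - 1 ∧ (r0 : ℤ) = (rh : ℤ) - 1) := by
  obtain ⟨t, ht⟩ := hodd
  have ht1 : 1 ≤ t := by omega
  obtain ⟨m0, E0⟩ := h0.1
  obtain ⟨mh, Eh⟩ := hh.1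
  obtain ⟨m1, E1⟩ := h1.1
  have hsp : (0:ℝ) < s := by
    rw [hs]; have : (3:ℝ) ≤ (p:ℝ) := by exact_mod_cast hp
    linarith
  have hst : s = (t:ℝ) + 1/2 := by
    rw [hs]; push_cast [ht]; ring
  have hm0n : (0:ℝ) ≤ (m0:ℝ) := Nat.cast_nonneg m0
  have hmhn : (0:ℝ) ≤ (mh:ℝ) := Nat.cast_nonneg mh
  have hm1n : (0:ℝ) ≤ (m1:ℝ) := Nat.cast_nonneg m1
  -- parity facts
  have hP1 : (p:ℤ) * ((r1:ℤ) - rh) = 1 + 2 * ((mh:ℤ) - m1) := by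
    have hr : (p:ℝ) * ((r1:ℝ) - rh) = 1 + 2 * ((mh:ℝ) - m1) := by
      have h2s : (p:ℝ) = 2 * s := by rw [hs]; ring
      have e : 2 * s * ((r1:ℝ) - rh) = 2 * (s * r1) - 2 * (s * rh) := by ring
      rw [h2s, e]; linarith [E1, Eh]
    exact_mod_cast hr
  have hP0 : (p:ℤ) * ((rh:ℤ) - r0) = 1 + 2 * ((m0:ℤ) - mh) := by
    have hr : (p:ℝ) * ((rh:ℝ) - r0) = 1 + 2 * ((m0:ℝ) - mh) := by
      have h2s : (p:ℝ) = 2 * s := by rw [hs]; ring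
      have e : 2 * s * ((rh:ℝ) - r0) = 2 * (s * rh) - 2 * (s * r0) := by ring
      rw [h2s, e]; linarith [E0, Eh]
    exact_mod_cast hr
  have hne1 : r1 ≠ rh := by
    intro h; rw [h] at hP1; simp at hP1; omega
  have hne0 : r0 ≠ rh := by
    intro h; rw [h] at hP0; simp at hP0; omega
  -- r0 ≤ r1 always
  have hr01 : r0 ≤ r1 := by
    refine le_max_aux s (x+1) r1 h1 r0 ((m0:ℤ) + 1) (by positivity) ?_
    push_cast; linarith [E0]
  refine ⟨?_, ?_, ?_⟩
  · rintro ⟨k, hk⟩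
    -- k = r1 and m1 = 0
    have hkr : (r1:ℤ) ≤ k := by
      have hr : (r1:ℝ) ≤ (k:ℝ) := by
        have e : s * (k:ℝ) = (k:ℝ) * s := by ring
        have h2 : s * (r1:ℝ) ≤ s * (k:ℝ) := by linarith [E1]
        exact le_of_mul_le_mul_left h2 hsp
      exact_mod_cast hr
    have hk0 : 0 ≤ k := le_trans (by positivity) hkr
    have hkle : k.toNat ≤ r1 := by
      refine le_max_aux s (x+1) r1 h1 k.toNat 0 le_rfl ?_
      have hc : ((k.toNat:ℕ):ℝ) = (k:ℝ) := by exact_mod_cast Int.toNat_of_nonneg hk0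
      rw [hk, hc]; ring
    have hkeq : k = (r1:ℤ) := by omega
    have hm1 : (m1:ℝ) = 0 := by rw [hkeq] at hk; push_cast at hk; linarith [E1]
    have hxe : x + 1 = s * r1 := by linarith [E1]
    have hr1pos : 1 ≤ r1 := by
      by_contra h
      have hz : r1 = 0 := by omega
      rw [hz] at hxe; simp at hxe
      have hrn : (0:ℝ) ≤ s * (rh:ℝ) := mul_nonneg hsp.le (Nat.cast_nonneg rh)
      linarith [Eh]
    -- rh = r1 - 1
    have hle1 : r1 - 1 ≤ rh := by
      refine le_max_aux s (x+1/2) rh hh (r1-1) t (by omega) ?_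
      have hc : ((r1-1:ℕ):ℝ) = (r1:ℝ) - 1 := by
        push_cast [Nat.cast_sub hr1pos]; ring
      have e : s * ((r1:ℝ) - 1) = s * (r1:ℝ) - s := by ring
      rw [hc, e, hst] at *; linarith [hxe]
    have hlt1 : rh < r1 := by
      have h2 : s * (rh:ℝ) < s * (r1:ℝ) := by linarith [Eh, hxe]
      exact_mod_cast lt_of_mul_lt_mul_left h2 (le_of_lt hsp)
    have hrh1 : (r1:ℤ) = (rh:ℤ) + 1 := by omega
    have hrc : (r1:ℝ) = (rh:ℝ) + 1 := by exact_mod_cast hrh1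
    -- r0 = rh - 1
    have hr0le : r0 ≤ rh := by
      have e : s * ((rh:ℝ) + 1) = s * (rh:ℝ) + s := by ring
      have e2 : s * (r1:ℝ) = s * (rh:ℝ) + s := by rw [hrc, e]
      have h2 : s * (r0:ℝ) < s * ((rh:ℝ) + 1) := by
        rw [e]; linarith [E0, hxe]
      have h3 : (r0:ℝ) < (rh:ℝ) + 1 := lt_of_mul_lt_mul_left h2 (le_of_lt hsp)
      have h4 : (r0:ℤ) < (rh:ℤ) + 1 := by exact_mod_cast h3
      omega
    have hrhpos : 1 ≤ rh := by
      rcases Nat.eq_zero_or_pos rh with h | h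
      · exfalso; apply hne0; omega
      · exact h
    have hge : rh - 1 ≤ r0 := by
      refine le_max_aux s x r0 h0 (rh-1) (2*t) (by omega) ?_
      have hc : ((rh-1:ℕ):ℝ) = (rh:ℝ) - 1 := by
        push_cast [Nat.cast_sub hrhpos]; ring
      have e : s * ((rh:ℝ) - 1) = s * (rh:ℝ) - s := by ring
      have e2 : s * (r1:ℝ) = s * (rh:ℝ) + s := by rw [hrc]; ring
      rw [hc, e]
      push_cast
      rw [hst] at *
      linarith [hxe]
    constructor
    · omega
    · exact hrh1
  · rintro hnk hgt
    have hm1pos : 1 ≤ m1 := by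
      rcases Nat.eq_zero_or_pos m1 with h | h
      · exfalso; apply hnk
        refine ⟨(r1:ℤ), ?_⟩
        rw [h] at E1; push_cast at E1 ⊢; linarith
      · exact h
    have hr10 : r1 ≤ r0 := by
      refine le_max_aux s x r0 h0 r1 ((m1:ℤ) - 1) (by omega) ?_
      push_cast; linarith [E1]
    have hge : rh + 1 ≤ r1 := by
      have e : ((rh:ℝ) + 1) * s = s * (rh:ℝ) + s := by ring
      refine le_max_aux s (x+1) r1 h1 (rh+1) ((mh:ℤ) - t) ?_ ?_
      · have h2 : (0:ℝ) < (mh:ℝ) - t := by linarith [Eh, hst, e, hgt]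
        have h3 : (0:ℤ) < (mh:ℤ) - t := by exact_mod_cast h2
        omega
      · have e2 : s * ((rh:ℝ) + 1) = s * (rh:ℝ) + s := by ring
        push_cast; linarith [Eh, hst, e2]
    have hle : r1 - 1 ≤ rh := by
      refine le_max_aux s (x+1/2) rh hh (r1-1) ((m1:ℤ) + t) (by omega) ?_
      have hc : ((r1-1:ℕ):ℝ) = (r1:ℝ) - 1 := by
        push_cast [Nat.cast_sub (by omega : 1 ≤ r1)]; ring
      have e : s * ((r1:ℝ) - 1) = s * (r1:ℝ) - s := by ring
      rw [hc, e]; push_cast; linarith [E1, hst]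
    constructor <;> omega
  · rintro hnk hlt
    have hm1pos : 1 ≤ m1 := by
      rcases Nat.eq_zero_or_pos m1 with h | h
      · exfalso; apply hnk
        refine ⟨(r1:ℤ), ?_⟩
        rw [h] at E1; push_cast at E1 ⊢; linarith
      · exact h
    have hr10 : r1 ≤ r0 := by
      refine le_max_aux s x r0 h0 r1 ((m1:ℤ) - 1) (by omega) ?_
      push_cast; linarith [E1]
    have hr1le : r1 ≤ rh := by
      have e : ((rh:ℝ) + 1) * s = s * ((rh:ℝ) + 1) := by ring
      have h2 : s * (r1:ℝ) < s * ((rh:ℝ) + 1) := by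
        rw [e] at hlt; linarith [E1]
      have h3 : (r1:ℝ) < (rh:ℝ) + 1 := lt_of_mul_lt_mul_left h2 (le_of_lt hsp)
      have h4 : (r1:ℤ) < (rh:ℤ) + 1 := by exact_mod_cast h3
      omega
    have hrhpos : 1 ≤ rh := by
      rcases Nat.eq_zero_or_pos rh with h | h
      · exfalso; apply hne1; omega
      · exact h
    have hge : rh - 1 ≤ r1 := by
      refine le_max_aux s (x+1) r1 h1 (rh-1) ((mh:ℤ) + t + 1) (by omega) ?_
      have hc : ((rh-1:ℕ):ℝ) = (rh:ℝ) - 1 := by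
        push_cast [Nat.cast_sub hrhpos]; ring
      have e : s * ((rh:ℝ) - 1) = s * (rh:ℝ) - s := by ring
      rw [hc, e]; push_cast; linarith [Eh, hst]
    constructor <;> omega
end

section
/- Let s > 1 be a half-integer. Suppose agents i and j hold h_i and h_j heavy goods (each of value s) with h_i < h_j, together own ℓ light goods (value 1 each), and their bundle values w_i, w_j satisfy w_i ≠ w_j, where w_i + w_j = (h_i + h_j)*s + ℓ. After moving one heavy good from j to i (so i holds h_i + 1, j holds h_j - 1) and distributing the ℓ light goods greedily between them (repeatedly adding a light good to the currently lighter bundle), the resulting values w_i', w_j' satisfy w_i' * w_j' ≥ w_i * w_j. -/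
/-- Greedy distribution of `n` light goods of value 1 between two bundles:
each good is added to the currently lighter bundle. -/
noncomputable def greedy : ℕ → ℝ × ℝ → ℝ × ℝ
  | 0, p => p
  | n + 1, (a, b) => if a ≤ b then greedy n (a + 1, b) else greedy n (a, b + 1)

lemma greedy_sum : ∀ (n : ℕ) (a b : ℝ),
    (greedy n (a, b)).1 + (greedy n (a, b)).2 = a + b + n
  | 0, a, b => by simp [greedy]
  | n + 1, a, b => by
    rw [greedy]
    split
    · rw [greedy_sum n]; push_cast; ring
    · rw [greedy_sum n]; push_cast; ring

lemma greedy_mod : ∀ (n : ℕ) (a b : ℝ),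
    ∃ k : ℤ, (greedy n (a, b)).1 - (greedy n (a, b)).2 = a - b + k
  | 0, a, b => ⟨0, by simp [greedy]⟩
  | n + 1, a, b => by
    rw [greedy]
    split
    · obtain ⟨k, hk⟩ := greedy_mod n (a + 1) b
      exact ⟨k + 1, by rw [hk]; push_cast; ring⟩
    · obtain ⟨k, hk⟩ := greedy_mod n a (b + 1)
      exact ⟨k - 1, by rw [hk]; push_cast; ring⟩

lemma greedy_diff : ∀ (n : ℕ) (a b : ℝ),
    |(greedy n (a, b)).1 - (greedy n (a, b)).2| ≤ max (|a - b| - n) 1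
  | 0, a, b => by simp [greedy]
  | n + 1, a, b => by
    rw [greedy]
    split
    · refine le_trans (greedy_diff n (a + 1) b) ?_
      rcases abs_cases (a + 1 - b) with ⟨h1, h2⟩ | ⟨h1, h2⟩ <;>
        rcases abs_cases (a - b) with ⟨h3, h4⟩ | ⟨h3, h4⟩ <;>
          simp only [max_def] <;> split_ifs <;> push_cast at * <;> linarith
    · refine le_trans (greedy_diff n a (b + 1)) ?_
      rcases abs_cases (a - (b + 1)) with ⟨h1, h2⟩ | ⟨h1, h2⟩ <;>
        rcases abs_cases (a - b) with ⟨h3, h4⟩ | ⟨h3, h4⟩ <;>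
          simp only [max_def] <;> split_ifs <;> push_cast at * <;> linarith

theorem stmt_9 (s : ℝ) (hs1 : s > 1) (hs : ∃ p : ℤ, s = (p : ℝ) / 2)
    (hi hj ℓi ℓj ℓ : ℕ) (hij : hi < hj) (hℓ : ℓi + ℓj = ℓ)
    (wi wj : ℝ) (hwi : wi = (hi : ℝ) * s + ℓi) (hwj : wj = (hj : ℝ) * s + ℓj)
    (hne : wi ≠ wj)
    (wi' wj' : ℝ)
    (hgreedy : (wi', wj') = greedy ℓ (((hi : ℝ) + 1) * s, ((hj : ℝ) - 1) * s)) :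
    wi' * wj' ≥ wi * wj := by
  obtain ⟨p, hp⟩ := hs
  set a : ℝ := ((hi : ℝ) + 1) * s with ha
  set b : ℝ := ((hj : ℝ) - 1) * s with hb
  have h1 : wi' = (greedy ℓ (a, b)).1 := by rw [← hgreedy]
  have h2 : wj' = (greedy ℓ (a, b)).2 := by rw [← hgreedy]
  have hℓR : (ℓi : ℝ) + ℓj = ℓ := by exact_mod_cast congrArg (Nat.cast : ℕ → ℝ) hℓ
  have hijR : (hi : ℝ) + 1 ≤ hj := by exact_mod_cast hij
  -- sums are equal
  have hsum : wi' + wj' = wi + wj := by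
    rw [h1, h2, greedy_sum, hwi, hwj, ha, hb]; linarith [hℓR]
  -- it suffices to bound the difference
  suffices habs : |wi' - wj'| ≤ |wi - wj| by
    have hk : (wi' - wj')^2 ≤ (wi - wj)^2 := by
      have h := abs_le.mp habs
      calc (wi' - wj')^2 ≤ |wi - wj|^2 := sq_le_sq' h.1 h.2
        _ = (wi - wj)^2 := sq_abs _
    have hsq : (wi' + wj')^2 = (wi + wj)^2 := by rw [hsum]
    nlinarith [hk, hsq]
  -- D = q/2 with q a nonzero integer
  set D : ℝ := wi - wj with hD
  set q : ℤ := ((hi : ℤ) - hj) * p + 2 * ((ℓi : ℤ) - ℓj) with hq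
  have hDq : D = (q : ℝ) / 2 := by
    rw [hD, hwi, hwj, hq, hp]; push_cast; ring
  have hq0 : q ≠ 0 := by
    intro h
    apply hne
    have : D = 0 := by rw [hDq, h]; norm_num
    linarith [this]
  have hDhalf : (1:ℝ)/2 ≤ |D| := by
    rw [hDq, abs_div]
    have : (1:ℤ) ≤ |q| := Int.one_le_abs hq0
    have : (1:ℝ) ≤ |(q:ℝ)| := by rw [← Int.cast_abs]; exact_mod_cast this
    rw [abs_of_pos (by norm_num : (0:ℝ) < 2)]
    linarith
  -- difference bound from greedy
  have hdb : |wi' - wj'| ≤ max (|a - b| - ℓ) 1 := by rw [h1, h2]; exact greedy_diff ℓ a b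
  -- integrality of the difference shift
  obtain ⟨k, hk⟩ := greedy_mod ℓ a b
  have hd' : wi' - wj' = D + ((p - (ℓi:ℤ) + ℓj + k : ℤ) : ℝ) := by
    rw [h1, h2] at *
    rw [hk, ha, hb, hD, hwi, hwj, hp]; push_cast; ring
  set k' : ℤ := p - (ℓi:ℤ) + ℓj + k with hk'
  -- |a - b| ≤ (hj - hi) * s
  have habss : |a - b| ≤ ((hj : ℝ) - hi) * s := by
    have h3 : |(hi : ℝ) - hj + 2| ≤ (hj : ℝ) - hi := by
      rw [abs_le]; constructor <;> linarith
    have : a - b = ((hi : ℝ) - hj + 2) * s := by rw [ha, hb]; ring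
    rw [this, abs_mul, abs_of_pos (by linarith : (0:ℝ) < s)]
    exact mul_le_mul_of_nonneg_right h3 (by linarith)
  rcases le_or_gt (|a - b| - ℓ) 1 with hcase | hcase
  · -- small case: |wi' - wj'| ≤ 1
    have hd1 : |wi' - wj'| ≤ 1 := le_trans hdb (by simp [hcase])
    rcases le_or_gt 1 |D| with hD1 | hD1
    · linarith
    · -- |D| = 1/2
      have hqabs : |q| ≤ 1 := by
        by_contra h
        have h2 : (2:ℤ) ≤ |q| := by omega
        have : (2:ℝ) ≤ |(q:ℝ)| := by rw [← Int.cast_abs]; exact_mod_cast h2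
        rw [hDq, abs_div, abs_of_pos (by norm_num : (0:ℝ) < 2)] at hD1
        linarith
      obtain ⟨hql, hqu⟩ := abs_le.mp hqabs
      have hq1 : q = 1 ∨ q = -1 := by omega
      -- wi' - wj' = (q + 2k')/2 with odd numerator of abs ≤ 2
      have hnum : wi' - wj' = ((q + 2 * k' : ℤ) : ℝ) / 2 := by
        rw [hd', hDq]; push_cast; ring
      have hb2 : |((q + 2 * k' : ℤ) : ℝ)| ≤ 2 := by
        rw [hnum] at hd1
        rw [abs_div, abs_of_pos (by norm_num : (0:ℝ) < 2)] at hd1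
        linarith
      have hb2' : |q + 2 * k'| ≤ 2 := by
        have : |((q + 2 * k' : ℤ) : ℝ)| = ((|q + 2 * k'| : ℤ) : ℝ) := by
          rw [Int.cast_abs]
        rw [this] at hb2; exact_mod_cast hb2
      obtain ⟨hbl, hbu⟩ := abs_le.mp hb2'
      have hb1 : |q + 2 * k'| ≤ 1 := by
        rw [abs_le]; omega
      have : |wi' - wj'| ≤ 1/2 := by
        rw [hnum, abs_div, abs_of_pos (by norm_num : (0:ℝ) < 2)]
        have : ((|q + 2*k'| : ℤ) : ℝ) ≤ 1 := by exact_mod_cast hb1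
        rw [← Int.cast_abs]
        linarith
      linarith
  · -- large case
    have hd1 : |wi' - wj'| ≤ |a - b| - ℓ := le_trans hdb (by rw [max_eq_left (by linarith)])
    have hnegD : -D ≤ |D| := neg_le_abs D
    have : -D = ((hj:ℝ) - hi) * s + (ℓj : ℝ) - ℓi := by rw [hD, hwi, hwj]; ring
    have hle : ((hj:ℝ) - hi) * s - ℓ ≤ -D := by
      rw [this]
      have : (ℓi : ℝ) ≤ ℓ := by linarith [hℓR, (by positivity : (0:ℝ) ≤ (ℓj:ℝ))]
      linarith [(by positivity : (0:ℝ) ≤ (ℓj:ℝ))]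
    linarith
end

section
/- Let x > 0 and suppose among the bundles there are at least two of value x + 3/2 and at least one of value x. Then replacing two bundles of value x + 3/2 and one of value x by three bundles of value x + 1 preserves the number of bundles and the total value, and strictly increases the product of all bundle values. -/
theorem stmt_16 (x : ℝ) (hx : x > 0) (np n₀ n₁ : ℕ)
    (hnp : np ≥ 2) (hn₀ : n₀ ≥ 1) :
    (np - 2) + (n₀ - 1) + (n₁ + 3) = np + n₀ + n₁ ∧
    ((np : ℝ) - 2) * (x + 3/2) + ((n₀ : ℝ) - 1) * x + ((n₁ : ℝ) + 3) * (x + 1) =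
      (np : ℝ) * (x + 3/2) + (n₀ : ℝ) * x + (n₁ : ℝ) * (x + 1) ∧
    (x + 3/2) ^ (np - 2) * x ^ (n₀ - 1) * (x + 1) ^ (n₁ + 3) >
      (x + 3/2) ^ np * x ^ n₀ * (x + 1) ^ n₁ := by
  obtain ⟨k, rfl⟩ : ∃ k, np = k + 2 := ⟨np - 2, by omega⟩
  obtain ⟨m, rfl⟩ : ∃ m, n₀ = m + 1 := ⟨n₀ - 1, by omega⟩
  refine ⟨by omega, by push_cast; ring, ?_⟩
  have h1 : (0:ℝ) < x + 3/2 := by linarith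
  have h2 : (0:ℝ) < x + 1 := by linarith
  have key : (x + 3/2) ^ 2 * x * (x + 1) ^ 0 < (x + 3/2) ^ 0 * x ^ 0 * (x + 1) ^ 3 := by
    nlinarith [sq_nonneg x]
  calc (x + 3/2) ^ (k + 2) * x ^ (m + 1) * (x + 1) ^ n₁
      = ((x + 3/2) ^ 2 * x) * ((x + 3/2) ^ k * x ^ m * (x + 1) ^ n₁) := by ring
    _ < (x + 1) ^ 3 * ((x + 3/2) ^ k * x ^ m * (x + 1) ^ n₁) := by
        apply mul_lt_mul_of_pos_right
        · nlinarith
        · positivity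
    _ = (x + 3/2) ^ k * x ^ m * (x + 1) ^ (n₁ + 3) := by ring
end
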